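/- arXiv:0911.3923 — 2 statements merged into one kernel-verified Lean document; each statement's English description precedes it below -/
import Mathlib

section
/- Any two triangles of the Farey graph F are chain-connected in F: for any triangles Δ, Δ' of F there is a finite sequence of triangles Δ = Δ₁, …, Δ_m = Δ' of F such that for each j the intersection Δ_j ∩ Δ_{j+1} consists of two adjacent vertices. -/
/-- A coprime pair of integers, representing a vertex of the Farey graph. -/
def FareyPair : Type := {p : ℤ × ℤ // IsCoprime p.1 p.2}

/-- The equivalence identifying a coprime pair with its negation. -/
def fareySetoid : Setoid FareyPair where
  r x y := x.val = y.val ∨ x.val = -y.val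
  iseqv := by
    refine ⟨fun x => Or.inl rfl, ?_, ?_⟩
    · rintro x y (h | h)
      · exact Or.inl h.symm
      · exact Or.inr (by rw [h, neg_neg])
    · rintro x y z (h1 | h1) (h2 | h2)
      · exact Or.inl (h1.trans h2)
      · exact Or.inr (by rw [h1, h2])
      · exact Or.inr (by rw [h1, h2])
      · exact Or.inl (by rw [h1, h2, neg_neg])

/-- A vertex of the Farey graph: a coprime pair of integers up to simultaneous
negation. -/
def FareyVertex : Type := Quotient fareySetoid

/-- The vertex `[p:q]` of the Farey graph. -/
def fareyMk (p q : ℤ) (h : IsCoprime p q) : FareyVertex :=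
  Quotient.mk fareySetoid ⟨(p, q), h⟩

/-- The determinant `p * s - q * r` of two pairs `(p, q)` and `(r, s)`. -/
def fareyDet (x y : FareyPair) : ℤ := x.val.1 * y.val.2 - x.val.2 * y.val.1

private lemma farey_abs_helper (a b : ℤ) (h : a = b ∨ a = -b) :
    (|a| = 1) = (|b| = 1) := by
  rcases h with h | h <;> (rw [h]; try simp)

/-- The Farey graph: vertices `[p:q]` and `[r:s]` are adjacent iff `|ps - qr| = 1`. -/
def FareyGraph : SimpleGraph FareyVertex where
  Adj := Quotient.lift₂ (fun x y => |fareyDet x y| = 1) (by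
    rintro x y x' y' (h1 | h1) (h2 | h2) <;> apply farey_abs_helper
    · exact Or.inl (by simp only [fareyDet, h1, h2])
    · refine Or.inr ?_
      simp only [fareyDet, h1, h2, Prod.fst_neg, Prod.snd_neg]
      ring
    · refine Or.inr ?_
      simp only [fareyDet, h1, h2, Prod.fst_neg, Prod.snd_neg]
      ring
    · refine Or.inl ?_
      simp only [fareyDet, h1, h2, Prod.fst_neg, Prod.snd_neg]
      ring)
  symm := by
    constructor
    intro u v
    refine Quotient.inductionOn₂ u v ?_
    intro x y h
    change |fareyDet x y| = 1 at h
    change |fareyDet y x| = 1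
    rw [show fareyDet y x = -fareyDet x y from by simp only [fareyDet]; ring,
      abs_neg]
    exact h
  loopless := by
    constructor
    intro u
    refine Quotient.inductionOn u ?_
    intro x h
    change |fareyDet x x| = 1 at h
    rw [show fareyDet x x = 0 from by simp only [fareyDet]; ring] at h
    simp at h

noncomputable instance : DecidableEq FareyVertex := Classical.decEq _


/-- Two triangles `s, t` of a simple graph `G` are chain-connected in `G` if there is
a finite sequence of triangles from `s` to `t` in which consecutive triangles meet
along an edge of `G`. -/
def ChainConnected {V : Type*} [DecidableEq V] (G : SimpleGraph V)
    (s t : Finset V) : Prop :=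
  ∃ (m : ℕ) (c : Fin (m + 1) → Finset V),
    c 0 = s ∧ c (Fin.last m) = t ∧ (∀ i, G.IsNClique 3 (c i)) ∧
    ∀ i : Fin m, ∃ x y : V, G.Adj x y ∧ c i.castSucc ∩ c i.succ = {x, y}
namespace FareyAux

/-- determinant of two integer pairs -/
def vdet (a b : ℤ × ℤ) : ℤ := a.1 * b.2 - a.2 * b.1

lemma vdet_skew (a b : ℤ × ℤ) : vdet b a = -vdet a b := by simp [vdet]; ring

lemma cop_left {a b : ℤ × ℤ} (h : vdet a b = 1) : IsCoprime a.1 a.2 :=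
  ⟨b.2, -b.1, by simp only [vdet] at h; linarith⟩

lemma cop_right {a b : ℤ × ℤ} (h : vdet a b = 1) : IsCoprime b.1 b.2 :=
  ⟨-a.2, a.1, by simp only [vdet] at h; linarith⟩

/-- make a Farey vertex from a pair -/
def mkv (a : ℤ × ℤ) (h : IsCoprime a.1 a.2) : FareyVertex :=
  Quotient.mk fareySetoid ⟨a, h⟩

lemma mkv_congr {a b : ℤ × ℤ} (h : a = b) {ha hb} : mkv a ha = mkv b hb := by
  subst h; rfl

lemma mkv_neg (a : ℤ × ℤ) (ha : IsCoprime a.1 a.2) (ha' : IsCoprime (-a).1 (-a).2) :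
    mkv (-a) ha' = mkv a ha :=
  Quotient.sound (Or.inr rfl)

lemma mkv_ne {a b : ℤ × ℤ} {ha hb} (h : vdet a b ≠ 0) : mkv a ha ≠ mkv b hb := by
  intro he
  rcases Quotient.exact he with h1 | h1
  · apply h
    have h2 : a = b := h1
    subst h2; simp [vdet]; ring
  · apply h
    have h2 : a = -b := h1
    subst h2; simp [vdet]; ring

lemma adj_mkv {a b : ℤ × ℤ} {ha hb} :
    FareyGraph.Adj (mkv a ha) (mkv b hb) ↔ |vdet a b| = 1 := Iff.rfl

lemma vdet_aab {a b : ℤ × ℤ} (h : vdet a b = 1) : vdet a (a + b) = 1 := by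
  simp only [vdet, Prod.fst_add, Prod.snd_add] at *; linarith [h]

lemma vdet_bab {a b : ℤ × ℤ} (h : vdet a b = 1) : vdet b (a + b) = -1 := by
  simp only [vdet, Prod.fst_add, Prod.snd_add] at *; linarith [h]

/-- the triangle of a determinant-one pair of pairs -/
noncomputable def triF (a b : ℤ × ℤ) (h : vdet a b = 1) : Finset FareyVertex :=
  {mkv a (cop_left h), mkv b (cop_right h),
   mkv (a + b) (cop_right (vdet_aab h))}

lemma triF_congr {a b a' b' : ℤ × ℤ} (h1 : a = a') (h2 : b = b') {h h'} :
    triF a b h = triF a' b' h' := by subst h1; subst h2; rfl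

lemma triF_clique (a b : ℤ × ℤ) (h : vdet a b = 1) :
    FareyGraph.IsNClique 3 (triF a b h) := by
  rw [triF, SimpleGraph.is3Clique_triple_iff]
  refine ⟨?_, ?_, ?_⟩ <;> rw [adj_mkv]
  · rw [h]; norm_num
  · rw [vdet_aab h]; norm_num
  · rw [vdet_bab h]; norm_num

/-- the relation of being triangles sharing an edge -/
def FlipRel (s t : Finset FareyVertex) : Prop :=
  FareyGraph.IsNClique 3 s ∧ FareyGraph.IsNClique 3 t ∧
    ∃ x y, FareyGraph.Adj x y ∧ s ∩ t = {x, y}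

lemma flipRel_symm : Symmetric FlipRel := by
  rintro s t ⟨hs, ht, x, y, hadj, hint⟩
  exact ⟨ht, hs, x, y, hadj, by rwa [Finset.inter_comm]⟩

/-- the fundamental flip: across the edge {a, a+b} -/
lemma tri_inter {A B C D : FareyVertex} (hBA : B ≠ A) (hBC : B ≠ C) (hBD : B ≠ D)
    (hDA : D ≠ A) (hDC : D ≠ C) :
    ({A, B, C} : Finset FareyVertex) ∩ {A, C, D} = {A, C} := by
  ext x
  simp only [Finset.mem_inter, Finset.mem_insert, Finset.mem_singleton]
  constructor
  · rintro ⟨h1 | h1 | h1, h2 | h2 | h2⟩ <;> subst h1 <;> tauto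
  · rintro (rfl | rfl) <;> tauto

lemma flip_S1 (a b : ℤ × ℤ) (h : vdet a b = 1) (h' : vdet a (b + a) = 1) :
    FlipRel (triF a b h) (triF a (b + a) h') := by
  refine ⟨triF_clique _ _ h, triF_clique _ _ h',
    mkv a (cop_left h), mkv (a + b) (cop_right (vdet_aab h)), ?_, ?_⟩
  · rw [adj_mkv, vdet_aab h]; norm_num
  · show ({mkv a (cop_left h), mkv b (cop_right h),
        mkv (a + b) (cop_right (vdet_aab h))} : Finset FareyVertex) ∩
      {mkv a (cop_left h), mkv (b + a) (cop_right h'),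
        mkv (a + (b + a)) (cop_right (vdet_aab h'))} = _
    rw [mkv_congr (show b + a = a + b from add_comm b a)
      (hb := cop_right (vdet_aab h))]
    refine tri_inter ?_ ?_ ?_ ?_ ?_ <;> refine mkv_ne ?_
    · have : vdet b a = -1 := by
        simp only [vdet] at h ⊢; linear_combination -h
      rw [this]; norm_num
    · have : vdet b (a + b) = -1 := by
        simp only [vdet, Prod.fst_add, Prod.snd_add] at h ⊢; linear_combination -h
      rw [this]; norm_num
    · have : vdet b (a + (b + a)) = -2 := by
        simp only [vdet, Prod.fst_add, Prod.snd_add] at h ⊢; linear_combination -2*h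
      rw [this]; norm_num
    · have : vdet (a + (b + a)) a = -1 := by
        simp only [vdet, Prod.fst_add, Prod.snd_add] at h ⊢; linear_combination -h
      rw [this]; norm_num
    · have : vdet (a + (b + a)) (a + b) = 1 := by
        simp only [vdet, Prod.fst_add, Prod.snd_add] at h ⊢; linear_combination h
      rw [this]; norm_num

lemma flip_S2 (a b : ℤ × ℤ) (h : vdet a b = 1) (h' : vdet a (b - a) = 1) :
    FlipRel (triF a b h) (triF a (b - a) h') := by
  have e : (b - a) + a = b := by ring
  have h2 : vdet a ((b - a) + a) = 1 := by rw [e]; exact h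
  have h3 := flip_S1 a (b - a) h' h2
  rw [triF_congr rfl e (h := h2) (h' := h)] at h3
  exact flipRel_symm h3

end FareyAux
namespace FareyAux

lemma cop_neg {a : ℤ × ℤ} (h : IsCoprime a.1 a.2) : IsCoprime (-a).1 (-a).2 := by
  simpa [Prod.fst_neg, Prod.snd_neg] using h.neg_neg

lemma triF_neg (a b : ℤ × ℤ) (h : vdet a b = 1) (h' : vdet (-a) (-b) = 1) :
    triF (-a) (-b) h' = triF a b h := by
  unfold triF
  rw [mkv_neg a (cop_left h), mkv_neg b (cop_right h),
    mkv_congr (show -a + -b = -(a + b) by ring)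
      (hb := cop_neg (cop_right (vdet_aab h))),
    mkv_neg (a + b) (cop_right (vdet_aab h))]

lemma triF_swap (a b : ℤ × ℤ) (h2 : vdet b (-a) = 1) (h3 : vdet a (b - a) = 1) :
    triF b (-a) h2 = triF a (b - a) h3 := by
  unfold triF
  rw [mkv_neg a (cop_left h3), mkv_congr (show b + -a = b - a by ring)
      (hb := cop_right h3),
    mkv_congr (show a + (b - a) = b by ring) (hb := cop_left h2)]
  rw [Finset.insert_comm, Finset.pair_comm]

lemma swap_step (a b : ℤ × ℤ) (h : vdet a b = 1) (h2 : vdet b (-a) = 1) :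
    FlipRel (triF a b h) (triF b (-a) h2) := by
  have h3 : vdet a (b - a) = 1 := by
    simp only [vdet, Prod.fst_sub, Prod.snd_sub] at h ⊢; linear_combination h
  rw [triF_swap a b h2 h3]
  exact flip_S2 a b h h3

noncomputable def baseTri : Finset FareyVertex :=
  triF (1, 0) (0, 1) (by norm_num [vdet])

lemma chain_refl {s : Finset FareyVertex} (hs : FareyGraph.IsNClique 3 s) :
    ChainConnected FareyGraph s s :=
  ⟨0, fun _ => s, rfl, rfl, fun _ => hs, fun i => i.elim0⟩

lemma chain_tail {s t u : Finset FareyVertex} (h : ChainConnected FareyGraph s t)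
    (hr : FlipRel t u) : ChainConnected FareyGraph s u := by
  obtain ⟨m, c, h0, hl, hcl, hadj⟩ := h
  obtain ⟨hct, hcu, x, y, hxy, hint⟩ := hr
  refine ⟨m + 1, Fin.snoc c u, ?_, ?_, ?_, ?_⟩
  · rw [← Fin.castSucc_zero, Fin.snoc_castSucc]; exact h0
  · rw [Fin.snoc_last]
  · intro i
    refine Fin.lastCases ?_ ?_ i
    · rw [Fin.snoc_last]; exact hcu
    · intro j; rw [Fin.snoc_castSucc]; exact hcl j
  · intro i
    refine Fin.lastCases ?_ ?_ i
    · refine ⟨x, y, hxy, ?_⟩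
      rw [Fin.succ_last, Fin.snoc_last, Fin.snoc_castSucc, hl]
      exact hint
    · intro j
      obtain ⟨x', y', hxy', hint'⟩ := hadj j
      refine ⟨x', y', hxy', ?_⟩
      rw [Fin.succ_castSucc, Fin.snoc_castSucc, Fin.snoc_castSucc]
      exact hint'

lemma chain_of_rtg {s t : Finset FareyVertex} (hs : FareyGraph.IsNClique 3 s)
    (h : Relation.ReflTransGen FlipRel s t) : ChainConnected FareyGraph s t := by
  induction h with
  | refl => exact chain_refl hs
  | tail h1 step ih => exact chain_tail ih step

end FareyAux
namespace FareyAux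

lemma done_simple : ∀ (n : ℕ) (p : ℤ), p.natAbs ≤ n →
    ∀ h : vdet ((1 : ℤ), (0 : ℤ)) (p, 1) = 1,
    Relation.ReflTransGen FlipRel (triF (1, 0) (p, 1) h) baseTri := by
  intro n
  induction n with
  | zero =>
    intro p hp h
    have hp0 : p = 0 := by omega
    subst hp0
    exact Relation.ReflTransGen.refl
  | succ n ih =>
    intro p hp h
    rcases lt_trichotomy p 0 with hneg | hzero | hpos
    · -- p < 0 : use S1, b + a = (p+1, 1)
      have h2 : vdet ((1 : ℤ), (0 : ℤ)) ((p, 1) + (1, 0)) = 1 := by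
        simp [vdet, Prod.fst_add, Prod.snd_add]
      have step := flip_S1 (1, 0) (p, 1) h h2
      have e : ((p, 1) + ((1 : ℤ), (0 : ℤ))) = ((p + 1 : ℤ), (1 : ℤ)) := by
        simp [Prod.ext_iff]
      have h3 : vdet ((1 : ℤ), (0 : ℤ)) ((p + 1 : ℤ), (1 : ℤ)) = 1 := by
        rw [← e]; exact h2
      rw [triF_congr rfl e (h := h2) (h' := h3)] at step
      exact Relation.ReflTransGen.head step (ih (p + 1) (by omega) h3)
    · subst hzero
      exact Relation.ReflTransGen.refl
    · -- p > 0 : use S2, b - a = (p-1, 1)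
      have h2 : vdet ((1 : ℤ), (0 : ℤ)) ((p, 1) - (1, 0)) = 1 := by
        simp [vdet, Prod.fst_sub, Prod.snd_sub]
      have step := flip_S2 (1, 0) (p, 1) h h2
      have e : ((p, 1) - ((1 : ℤ), (0 : ℤ))) = ((p - 1 : ℤ), (1 : ℤ)) := by
        simp [Prod.ext_iff]
      have h3 : vdet ((1 : ℤ), (0 : ℤ)) ((p - 1 : ℤ), (1 : ℤ)) = 1 := by
        rw [← e]; exact h2
      rw [triF_congr rfl e (h := h2) (h' := h3)] at step
      exact Relation.ReflTransGen.head step (ih (p - 1) (by omega) h3)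

lemma done0 (a b : ℤ × ℤ) (h : vdet a b = 1) (ha2 : a.2 = 0) :
    Relation.ReflTransGen FlipRel (triF a b h) baseTri := by
  have hmul : a.1 * b.2 = 1 := by
    have h' := h; simp only [vdet] at h'; rw [ha2] at h'; linarith
  rcases Int.isUnit_iff.mp (IsUnit.of_mul_eq_one _ hmul) with h1 | h1
  · -- a.1 = 1, b.2 = 1
    have hb2 : b.2 = 1 := by rw [h1] at hmul; linarith
    have ea : a = ((1 : ℤ), (0 : ℤ)) := Prod.ext h1 ha2
    have eb : b = ((b.1 : ℤ), (1 : ℤ)) := Prod.ext rfl hb2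
    have h3 : vdet ((1 : ℤ), (0 : ℤ)) ((b.1 : ℤ), (1 : ℤ)) = 1 := by
      rw [← ea, ← eb]; exact h
    rw [triF_congr ea eb (h := h) (h' := h3)]
    exact done_simple b.1.natAbs b.1 le_rfl h3
  · -- a.1 = -1, b.2 = -1 : negate
    have hb2 : b.2 = -1 := by rw [h1] at hmul; linarith
    have h2 : vdet (-a) (-b) = 1 := by
      simp only [vdet, Prod.fst_neg, Prod.snd_neg] at h ⊢; linear_combination h
    rw [← triF_neg a b h h2]
    have ea : -a = ((1 : ℤ), (0 : ℤ)) :=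
      Prod.ext (show -a.1 = 1 by omega) (show -a.2 = 0 by omega)
    have eb : -b = ((-b.1 : ℤ), (1 : ℤ)) :=
      Prod.ext rfl (show -b.2 = 1 by omega)
    have h3 : vdet ((1 : ℤ), (0 : ℤ)) ((-b.1 : ℤ), (1 : ℤ)) = 1 := by
      rw [← ea, ← eb]; exact h2
    rw [triF_congr ea eb (h := h2) (h' := h3)]
    exact done_simple (-b.1).natAbs (-b.1) le_rfl h3

lemma reduce_step (k : ℕ)
    (IH : ∀ (a b : ℤ × ℤ) (h : vdet a b = 1), a.2.natAbs + b.2.natAbs ≤ k →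
      Relation.ReflTransGen FlipRel (triF a b h) baseTri)
    (a b : ℤ × ℤ) (h : vdet a b = 1) (ha2 : a.2 ≠ 0) (hb2 : b.2 ≠ 0)
    (hle : a.2.natAbs ≤ b.2.natAbs) (hk : a.2.natAbs + b.2.natAbs ≤ k + 1) :
    Relation.ReflTransGen FlipRel (triF a b h) baseTri := by
  by_cases hsgn : (0 < a.2 ∧ 0 < b.2) ∨ (a.2 < 0 ∧ b.2 < 0)
  · -- same signs: subtract
    have h2 : vdet a (b - a) = 1 := by
      simp only [vdet, Prod.fst_sub, Prod.snd_sub] at h ⊢; linear_combination h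
    refine Relation.ReflTransGen.head (flip_S2 a b h h2) (IH a (b - a) h2 ?_)
    have e : (b - a).2 = b.2 - a.2 := rfl
    rw [e]
    rcases hsgn with ⟨h3, h4⟩ | ⟨h3, h4⟩ <;> omega
  · -- opposite signs: add
    have h2 : vdet a (b + a) = 1 := by
      simp only [vdet, Prod.fst_add, Prod.snd_add] at h ⊢; linear_combination h
    refine Relation.ReflTransGen.head (flip_S1 a b h h2) (IH a (b + a) h2 ?_)
    have e : (b + a).2 = b.2 + a.2 := rfl
    rw [e]
    push_neg at hsgn
    omega

lemma descent : ∀ (k : ℕ) (a b : ℤ × ℤ) (h : vdet a b = 1),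
    a.2.natAbs + b.2.natAbs ≤ k →
    Relation.ReflTransGen FlipRel (triF a b h) baseTri := by
  intro k
  induction k with
  | zero =>
    intro a b h hk
    exfalso
    have ha : a.2 = 0 := by omega
    have hb : b.2 = 0 := by omega
    simp only [vdet] at h; rw [ha, hb] at h; simp at h
  | succ k ih =>
    intro a b h hk
    by_cases ha2 : a.2 = 0
    · exact done0 a b h ha2
    · by_cases hb2 : b.2 = 0
      · have hsw : vdet b (-a) = 1 := by
          simp only [vdet, Prod.fst_neg, Prod.snd_neg] at h ⊢; linear_combination h
        exact Relation.ReflTransGen.head (swap_step a b h hsw) (done0 b (-a) hsw hb2)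
      · by_cases hle : a.2.natAbs ≤ b.2.natAbs
        · exact reduce_step k ih a b h ha2 hb2 hle hk
        · have hsw : vdet b (-a) = 1 := by
            simp only [vdet, Prod.fst_neg, Prod.snd_neg] at h ⊢; linear_combination h
          refine Relation.ReflTransGen.head (swap_step a b h hsw)
            (reduce_step k ih b (-a) hsw hb2 ?_ ?_ ?_)
          · simp only [Prod.snd_neg]; omega
          · simp only [Prod.snd_neg, Int.natAbs_neg]; omega
          · simp only [Prod.snd_neg, Int.natAbs_neg]; omega

end FareyAux
namespace FareyAux

lemma repr_core (a b c : ℤ × ℤ) (ha : IsCoprime a.1 a.2) (hb : IsCoprime b.1 b.2)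
    (hc : IsCoprime c.1 c.2) (hd : vdet a b = 1) (hm : |vdet c b| = 1)
    (hn : |vdet a c| = 1) :
    ∃ (A B : ℤ × ℤ) (hAB : vdet A B = 1),
      ({mkv a ha, mkv b hb, mkv c hc} : Finset FareyVertex) = triF A B hAB := by
  have e1 : c.1 = vdet c b * a.1 + vdet a c * b.1 := by
    simp only [vdet] at hd ⊢; linear_combination (-c.1) * hd
  have e2 : c.2 = vdet c b * a.2 + vdet a c * b.2 := by
    simp only [vdet] at hd ⊢; linear_combination (-c.2) * hd
  rcases (abs_eq (by norm_num : (0:ℤ) ≤ 1)).mp hm with hm1 | hm1 <;>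
    rcases (abs_eq (by norm_num : (0:ℤ) ≤ 1)).mp hn with hn1 | hn1 <;>
    rw [hm1, hn1] at e1 e2
  · -- c = a + b
    have hc' : c = a + b := Prod.ext (by show c.1 = a.1 + b.1; linarith)
      (by show c.2 = a.2 + b.2; linarith)
    refine ⟨a, b, hd, ?_⟩
    unfold triF
    rw [mkv_congr hc' (hb := cop_right (vdet_aab hd)) (ha := hc)]
  · -- c = a - b : use (-b, a)
    have hAB : vdet (-b) a = 1 := by
      simp only [vdet, Prod.fst_neg, Prod.snd_neg] at hd ⊢; linear_combination hd
    refine ⟨-b, a, hAB, ?_⟩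
    unfold triF
    rw [mkv_neg b hb (cop_left hAB),
      mkv_congr (show -b + a = c from by
        refine Prod.ext ?_ ?_
        · show -b.1 + a.1 = c.1; linarith
        · show -b.2 + a.2 = c.2; linarith) (hb := hc)
        (ha := cop_right (vdet_aab hAB))]
    rw [Finset.insert_comm]
  · -- c = b - a : use (b, -a)
    have hAB : vdet b (-a) = 1 := by
      simp only [vdet, Prod.fst_neg, Prod.snd_neg] at hd ⊢; linear_combination hd
    refine ⟨b, -a, hAB, ?_⟩
    unfold triF
    rw [mkv_neg a ha (cop_right hAB),
      mkv_congr (show b + -a = c from by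
        refine Prod.ext ?_ ?_
        · show b.1 + -a.1 = c.1; linarith
        · show b.2 + -a.2 = c.2; linarith) (hb := hc)
        (ha := cop_right (vdet_aab hAB))]
    rw [Finset.insert_comm]
  · -- c = -a - b : use (-a, -b)
    have hAB : vdet (-a) (-b) = 1 := by
      simp only [vdet, Prod.fst_neg, Prod.snd_neg] at hd ⊢; linear_combination hd
    refine ⟨-a, -b, hAB, ?_⟩
    unfold triF
    rw [mkv_neg a ha (cop_left hAB), mkv_neg b hb (cop_right hAB),
      mkv_congr (show -a + -b = c from by
        refine Prod.ext ?_ ?_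
        · show -a.1 + -b.1 = c.1; linarith
        · show -a.2 + -b.2 = c.2; linarith) (hb := hc)
        (ha := cop_right (vdet_aab hAB))]

lemma repr_tri (s : Finset FareyVertex) (hs : FareyGraph.IsNClique 3 s) :
    ∃ (A B : ℤ × ℤ) (h : vdet A B = 1), s = triF A B h := by
  obtain ⟨u, v, w, huv, huw, hvw, rfl⟩ := Finset.card_eq_three.mp hs.2
  obtain ⟨x, rfl⟩ := Quotient.exists_rep u
  obtain ⟨y, rfl⟩ := Quotient.exists_rep v
  obtain ⟨z, rfl⟩ := Quotient.exists_rep w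
  obtain ⟨hab, hac, hbc⟩ := SimpleGraph.is3Clique_triple_iff.mp hs
  have dab : |vdet x.val y.val| = 1 := hab
  have dac : |vdet x.val z.val| = 1 := hac
  have dbc : |vdet y.val z.val| = 1 := hbc
  have hset : ({Quotient.mk fareySetoid x, Quotient.mk fareySetoid y,
      Quotient.mk fareySetoid z} : Finset FareyVertex)
      = {mkv x.val x.prop, mkv y.val y.prop, mkv z.val z.prop} := rfl
  change ∃ (A B : ℤ × ℤ) (h : vdet A B = 1),
    ({mkv x.val x.prop, mkv y.val y.prop, mkv z.val z.prop} : Finset FareyVertex) = triF A B h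
  have dcb : |vdet z.val y.val| = 1 := by
    rw [vdet_skew z.val y.val] at dbc; rwa [abs_neg] at dbc
  rcases (abs_eq (by norm_num : (0:ℤ) ≤ 1)).mp dab with hd | hd
  · exact repr_core x.val y.val z.val x.prop y.prop z.prop hd dcb dac
  · have hd' : vdet y.val x.val = 1 := by rw [vdet_skew x.val y.val, hd]; norm_num
    have dca : |vdet z.val x.val| = 1 := by
      rw [vdet_skew z.val x.val] at dac; rwa [abs_neg] at dac
    obtain ⟨A, B, hh, e⟩ :=
      repr_core y.val x.val z.val y.prop x.prop z.prop hd' dca dbc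
    refine ⟨A, B, hh, ?_⟩
    rw [Finset.insert_comm]
    exact e

end FareyAux
/-- Any two triangles of the Farey graph are chain-connected. -/
theorem fareyGraph_triangles_chainConnected (s t : Finset FareyVertex)
    (hs : FareyGraph.IsNClique 3 s) (ht : FareyGraph.IsNClique 3 t) :
    ChainConnected FareyGraph s t := by
  obtain ⟨A, B, hAB, rfl⟩ := FareyAux.repr_tri s hs
  obtain ⟨C, D, hCD, rfl⟩ := FareyAux.repr_tri t ht
  have h1 := FareyAux.descent (A.2.natAbs + B.2.natAbs) A B hAB le_rfl
  have h2 := FareyAux.descent (C.2.natAbs + D.2.natAbs) C D hCD le_rfl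
  exact FareyAux.chain_of_rtg hs
    (h1.trans ((@Relation.ReflTransGen.stdSymm _ _ ⟨fun a b h => FareyAux.flipRel_symm h⟩).symm _ _ h2))
end

section
/- Let a, c be adjacent vertices of the Farey graph F and let b, b' be the two distinct vertices of F such that {a, c, b} and {a, c, b'} are triangles of F. Then a vertex x of F is adjacent to both b and b' if and only if x = a or x = c. -/
private lemma fareyDet_comm (X Y : FareyPair) : fareyDet X Y = - fareyDet Y X := by
  simp only [fareyDet]; ring

private lemma adj_mk (X Y : FareyPair) :
    FareyGraph.Adj (Quotient.mk fareySetoid X) (Quotient.mk fareySetoid Y) ↔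
      |fareyDet X Y| = 1 := Iff.rfl

private lemma eq_of_det_zero (X Y : FareyPair) (h : fareyDet X Y = 0) :
    (Quotient.mk fareySetoid X : FareyVertex) = Quotient.mk fareySetoid Y := by
  apply Quotient.sound
  obtain ⟨α, β, hαβ⟩ := X.property
  have h' : X.val.1 * Y.val.2 - X.val.2 * Y.val.1 = 0 := h
  have h1 : Y.val.1 = (α * Y.val.1 + β * Y.val.2) * X.val.1 := by
    linear_combination Y.val.1 * hαβ.symm - β * h'
  have h2 : Y.val.2 = (α * Y.val.1 + β * Y.val.2) * X.val.2 := by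
    linear_combination Y.val.2 * hαβ.symm + α * h'
  have hu : IsUnit (α * Y.val.1 + β * Y.val.2) :=
    Y.property.isUnit_of_dvd' ⟨X.val.1, h1⟩ ⟨X.val.2, h2⟩
  rcases Int.isUnit_iff.mp hu with hk | hk <;> rw [hk] at h1 h2
  · exact Or.inl (Prod.ext (by linarith) (by linarith))
  · exact Or.inr (by
      apply Prod.ext
      · show X.val.1 = -Y.val.1
        linarith
      · show X.val.2 = -Y.val.2
        linarith)

example (q : FareyVertex) : ∃ X : FareyPair, Quotient.mk fareySetoid X = q :=
  Quotient.exists_rep q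

private lemma sign_of_abs_one {d : ℤ} (h : |d| = 1) : d = 1 ∨ d = -1 :=
  (abs_eq (by norm_num)).mp h

private lemma exists_signs (A C B : FareyPair) (hd : |fareyDet A C| = 1)
    (hA : |fareyDet A B| = 1) (hC : |fareyDet C B| = 1) :
    ∃ σ τ : ℤ, (σ = 1 ∨ σ = -1) ∧ (τ = 1 ∨ τ = -1) ∧
      B.val.1 = σ * A.val.1 - τ * C.val.1 ∧ B.val.2 = σ * A.val.2 - τ * C.val.2 := by
  have hdd : fareyDet A C * fareyDet A C = 1 := by
    rcases sign_of_abs_one hd with h | h <;> rw [h] <;> norm_num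
  have key1 : fareyDet A C * B.val.1 =
      fareyDet B C * A.val.1 - fareyDet B A * C.val.1 := by
    simp only [fareyDet]; ring
  have key2 : fareyDet A C * B.val.2 =
      fareyDet B C * A.val.2 - fareyDet B A * C.val.2 := by
    simp only [fareyDet]; ring
  refine ⟨fareyDet A C * fareyDet B C, fareyDet A C * fareyDet B A, ?_, ?_, ?_, ?_⟩
  · apply sign_of_abs_one
    rw [abs_mul, hd, fareyDet_comm B C, abs_neg, hC, one_mul]
  · apply sign_of_abs_one
    rw [abs_mul, hd, fareyDet_comm B A, abs_neg, hA, one_mul]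
  · linear_combination (-B.val.1) * hdd + fareyDet A C * key1
  · linear_combination (-B.val.2) * hdd + fareyDet A C * key2

/-- If `b, b'` are the two distinct third vertices of the two triangles of the Farey
graph on an edge `{a, c}`, then a vertex is adjacent to both `b` and `b'` iff it
equals `a` or `c`. -/
theorem fareyGraph_adj_both_diagonal (a c b b' : FareyVertex)
    (hac : FareyGraph.Adj a c) (hbb' : b ≠ b')
    (h1 : FareyGraph.IsNClique 3 {a, c, b}) (h2 : FareyGraph.IsNClique 3 {a, c, b'})
    (x : FareyVertex) :
    (FareyGraph.Adj x b ∧ FareyGraph.Adj x b') ↔ (x = a ∨ x = c) := by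
  classical
  have hcard2 : ∀ u v : FareyVertex, ({u, v} : Finset FareyVertex).card ≤ 2 :=
    fun u v => (Finset.card_insert_le _ _).trans (by simp)
  have hab : a ≠ b := by
    rintro rfl
    have hsub : ({a, c, a} : Finset FareyVertex) ⊆ {a, c} := by
      intro y hy; simp at hy ⊢; tauto
    have := (Finset.card_le_card hsub).trans (hcard2 a c)
    rw [h1.2] at this; omega
  have hcb : c ≠ b := by
    rintro rfl
    have hsub : ({a, c, c} : Finset FareyVertex) ⊆ {a, c} := by
      intro y hy; simp at hy ⊢; tauto
    have := (Finset.card_le_card hsub).trans (hcard2 a c)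
    rw [h1.2] at this; omega
  have hab' : a ≠ b' := by
    rintro rfl
    have hsub : ({a, c, a} : Finset FareyVertex) ⊆ {a, c} := by
      intro y hy; simp at hy ⊢; tauto
    have := (Finset.card_le_card hsub).trans (hcard2 a c)
    rw [h2.2] at this; omega
  have hcb' : c ≠ b' := by
    rintro rfl
    have hsub : ({a, c, c} : Finset FareyVertex) ⊆ {a, c} := by
      intro y hy; simp at hy ⊢; tauto
    have := (Finset.card_le_card hsub).trans (hcard2 a c)
    rw [h2.2] at this; omega
  have hadjab : FareyGraph.Adj a b := h1.1 (by simp) (by simp) hab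
  have hadjcb : FareyGraph.Adj c b := h1.1 (by simp) (by simp) hcb
  have hadjab' : FareyGraph.Adj a b' := h2.1 (by simp) (by simp) hab'
  have hadjcb' : FareyGraph.Adj c b' := h2.1 (by simp) (by simp) hcb'
  obtain ⟨A, rfl⟩ := Quotient.exists_rep a
  obtain ⟨C, rfl⟩ := Quotient.exists_rep c
  obtain ⟨B, rfl⟩ := Quotient.exists_rep b
  obtain ⟨B', rfl⟩ := Quotient.exists_rep b'
  have hd : |fareyDet A C| = 1 := hac
  have hAB : |fareyDet A B| = 1 := hadjab
  have hCB : |fareyDet C B| = 1 := hadjcb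
  have hAB' : |fareyDet A B'| = 1 := hadjab'
  have hCB' : |fareyDet C B'| = 1 := hadjcb'
  obtain ⟨σ, τ, hσ, hτ, hu1, hu2⟩ := exists_signs A C B hd hAB hCB
  obtain ⟨σ', τ', hσ', hτ', hv1, hv2⟩ := exists_signs A C B' hd hAB' hCB'
  have hσ2 : σ * σ = 1 := by rcases hσ with rfl | rfl <;> norm_num
  have hσ'2 : σ' * σ' = 1 := by rcases hσ' with rfl | rfl <;> norm_num
  have hdiff : σ * τ ≠ σ' * τ' := by
    intro hee
    apply hbb'
    apply Quotient.sound
    have e1 : B.val.1 = (σ * σ') * B'.val.1 := by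
      linear_combination hu1 - (σ * σ') * hv1 - σ * A.val.1 * hσ'2 -
        σ * C.val.1 * hee + τ * C.val.1 * hσ2
    have e2 : B.val.2 = (σ * σ') * B'.val.2 := by
      linear_combination hu2 - (σ * σ') * hv2 - σ * A.val.2 * hσ'2 -
        σ * C.val.2 * hee + τ * C.val.2 * hσ2
    have hss : σ * σ' = 1 ∨ σ * σ' = -1 := by
      rcases hσ with rfl | rfl <;> rcases hσ' with rfl | rfl <;> norm_num
    rcases hss with hs1 | hs1
    · left
      rw [hs1, one_mul] at e1 e2
      exact Prod.ext e1 e2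
    · right
      rw [hs1] at e1 e2
      apply Prod.ext
      · simp only [Prod.fst_neg]; linarith
      · simp only [Prod.snd_neg]; linarith
  constructor
  · rintro ⟨hxb, hxb'⟩
    obtain ⟨X, rfl⟩ := Quotient.exists_rep x
    have hm : fareyDet X B = σ * fareyDet X A - τ * fareyDet X C := by
      simp only [fareyDet]; rw [hu1, hu2]; ring
    have hm' : fareyDet X B' = σ' * fareyDet X A - τ' * fareyDet X C := by
      simp only [fareyDet]; rw [hv1, hv2]; ring
    have e1 : |fareyDet X B| = 1 := hxb
    have e2 : |fareyDet X B'| = 1 := hxb'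
    rw [hm] at e1
    rw [hm'] at e2
    have h0 : fareyDet X A = 0 ∨ fareyDet X C = 0 := by
      rcases hσ with rfl | rfl <;> rcases hτ with rfl | rfl <;>
        rcases hσ' with rfl | rfl <;> rcases hτ' with rfl | rfl <;>
        rcases sign_of_abs_one e1 with f1 | f1 <;>
        rcases sign_of_abs_one e2 with f2 | f2 <;> omega
    rcases h0 with h0 | h0
    · exact Or.inl (eq_of_det_zero X A h0)
    · exact Or.inr (eq_of_det_zero X C h0)
  · rintro (rfl | rfl)
    · exact ⟨hadjab, hadjab'⟩
    · exact ⟨hadjcb, hadjcb'⟩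
end
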